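/- Up to isomorphism, the unique connected simple graph with 6 vertices and 10 edges that has K₅ or K₃,₃ as a minor is the graph obtained from K₃,₃ by adding one extra edge. -/

import Mathlib

/-- `H` is a minor of `G`: `H` can be obtained from a subgraph of `G` by contracting edges.
Equivalently (branch-set formulation): there is a family of nonempty, pairwise disjoint,
connected subsets of the vertices of `G`, indexed by the vertices of `H`, such that whenever
two vertices are adjacent in `H` there is an edge of `G` between the corresponding sets. -/
def IsMinor {W V : Type} (H : SimpleGraph W) (G : SimpleGraph V) : Prop :=
  ∃ B : W → Set V,
    (∀ w, (B w).Nonempty) ∧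
    (∀ w, (G.induce (B w)).Connected) ∧
    (∀ w₁ w₂, w₁ ≠ w₂ → Disjoint (B w₁) (B w₂)) ∧
    (∀ w₁ w₂, H.Adj w₁ w₂ → ∃ u ∈ B w₁, ∃ x ∈ B w₂, G.Adj u x)

/-- The complete bipartite graph `K₃,₃`. -/
def K33 : SimpleGraph (Fin 3 ⊕ Fin 3) := completeBipartiteGraph (Fin 3) (Fin 3)

/-- The complete graph `K₅`. -/
def K5 : SimpleGraph (Fin 5) := ⊤

/-- The graph obtained from `K₃,₃` by adding one extra edge (joining the two vertices
`Sum.inl 0` and `Sum.inl 1` in the same part; any choice gives isomorphic graphs). -/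
def K33plus : SimpleGraph (Fin 3 ⊕ Fin 3) :=
  SimpleGraph.fromEdgeSet (insert s(Sum.inl 0, Sum.inl 1) K33.edgeSet)

instance : DecidableRel K33plus.Adj := fun a b => by
  rw [K33plus, SimpleGraph.fromEdgeSet_adj]
  have : Decidable (s(a, b) ∈ K33.edgeSet) := by
    rw [SimpleGraph.mem_edgeSet]
    exact inferInstanceAs (Decidable ((a.isLeft ∧ b.isRight) ∨ (a.isRight ∧ b.isLeft)))
  exact inferInstanceAs (Decidable (_ ∧ _))

lemma K33_le_K33plus : K33 ≤ K33plus := by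
  intro a b h
  rw [K33plus, SimpleGraph.fromEdgeSet_adj]
  exact ⟨Set.mem_insert_of_mem _ ((SimpleGraph.mem_edgeSet _).2 h), h.ne⟩

lemma K33_adj_lr (i j : Fin 3) : K33.Adj (Sum.inl i) (Sum.inr j) := Or.inl ⟨rfl, rfl⟩

lemma K33plus_connected : K33plus.Connected := by
  rw [SimpleGraph.connected_iff_exists_forall_reachable]
  refine ⟨Sum.inl 0, fun w => ?_⟩
  have h1 : ∀ i j, K33plus.Reachable (Sum.inl i) (Sum.inr j) :=
    fun i j => (K33_le_K33plus (K33_adj_lr i j)).reachable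
  cases w with
  | inl i => exact (h1 0 0).trans ((h1 i 0).symm)
  | inr j => exact h1 0 j

lemma induce_singleton_connected {V : Type} (G : SimpleGraph V) (v : V) :
    (G.induce {v}).Connected := by
  rw [SimpleGraph.connected_iff_exists_forall_reachable]
  refine ⟨⟨v, rfl⟩, fun w => ?_⟩
  have : w = ⟨v, rfl⟩ := Subtype.ext w.2
  rw [this]

lemma no_K5 {V : Type} [Fintype V] (h6 : Fintype.card V = 6) {G : SimpleGraph V}
    (hc : G.Connected) (h10 : G.edgeSet.ncard = 10) : ¬ IsMinor K5 G := by
  classical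
  rintro ⟨B, hne, hconn, hdisj, hadj⟩
  have hcard : G.edgeFinset.card = 10 := by
    rw [← h10, Set.ncard_eq_toFinset_card']
    exact congrArg Finset.card (by ext; simp)
  have huniq : ∀ {v : V} {i j : Fin 5}, v ∈ B i → v ∈ B j → i = j := by
    intro v i j hi hj
    by_contra h
    exact Set.disjoint_left.1 (hdisj i j h) hi hj
  have hmem : ∀ {x y : V} {i : Fin 5}, x = y → y ∈ B i → x ∈ B i :=
    fun h h' => h.symm ▸ h'
  have hVne : Nonempty V := Fintype.card_pos_iff.1 (by omega)
  have hpick : ∀ p : Fin 5 × Fin 5, ∃ q : V × V,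
      p.1 ≠ p.2 → q.1 ∈ B p.1 ∧ q.2 ∈ B p.2 ∧ G.Adj q.1 q.2 := by
    intro p
    by_cases hp : p.1 = p.2
    · exact ⟨(Classical.arbitrary V, Classical.arbitrary V), fun h => absurd hp h⟩
    · obtain ⟨u, hu, x, hx, h⟩ := hadj p.1 p.2 hp
      exact ⟨(u, x), fun _ => ⟨hu, hx, h⟩⟩
  choose q hq using hpick
  set g : Fin 5 × Fin 5 → Sym2 V := fun p => s((q p).1, (q p).2) with hg
  set D : Finset (Fin 5 × Fin 5) := Finset.univ.filter (fun p => p.1 < p.2) with hD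
  have hDcard : D.card = 10 := by decide
  have hspecial : ∃ e₀ ∈ G.edgeFinset, ∀ p ∈ D, g p ≠ e₀ := by
    by_cases hU : ∀ v : V, ∃ i, v ∈ B i
    · choose ix hix using hU
      have hlt : Fintype.card (Fin 5) < Fintype.card V := by simp [h6]
      obtain ⟨v, w, hvw, hixeq⟩ := Fintype.exists_ne_map_eq_of_card_lt ix hlt
      have hvB : v ∈ B (ix v) := hix v
      have hwB : w ∈ B (ix v) := by rw [hixeq]; exact hix w
      obtain ⟨wk⟩ := ((hconn (ix v)).preconnected ⟨v, hvB⟩ ⟨w, hwB⟩)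
      have hnn : ¬ wk.Nil := SimpleGraph.Walk.not_nil_of_ne
        (fun h => hvw (congrArg Subtype.val h))
      have hadj12 : G.Adj v ((wk.getVert 1) : V) :=
        SimpleGraph.Walk.adj_snd hnn
      obtain ⟨u₁, u₂, hu₁, hu₂, hadj12⟩ :
          ∃ u₁ u₂ : V, u₁ ∈ B (ix v) ∧ u₂ ∈ B (ix v) ∧ G.Adj u₁ u₂ :=
        ⟨v, (wk.getVert 1 : B (ix v)), hvB, (wk.getVert 1).2, hadj12⟩
      refine ⟨s(u₁, u₂), SimpleGraph.mem_edgeFinset.2 hadj12, fun p hp heq => ?_⟩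
      have hplt : p.1 < p.2 := by simpa [hD] using hp
      obtain ⟨hq1, hq2, -⟩ := hq p hplt.ne
      rw [hg] at heq
      rcases Sym2.eq_iff.1 heq with ⟨h1, h2⟩ | ⟨h1, h2⟩
      · exact hplt.ne ((huniq hq1 (hmem h1 hu₁)).trans (huniq hq2 (hmem h2 hu₂)).symm)
      · exact hplt.ne ((huniq hq1 (hmem h1 hu₂)).trans (huniq hq2 (hmem h2 hu₁)).symm)
    · push_neg at hU
      obtain ⟨v, hv⟩ := hU
      obtain ⟨u, hu⟩ := hne 0
      have hvu : v ≠ u := fun h => hv 0 (h ▸ hu)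
      obtain ⟨wk⟩ := hc.preconnected v u
      have hvadj : G.Adj v (wk.getVert 1) :=
        SimpleGraph.Walk.adj_snd (SimpleGraph.Walk.not_nil_of_ne hvu)
      set w := wk.getVert 1
      refine ⟨s(v, w), SimpleGraph.mem_edgeFinset.2 hvadj, fun p hp heq => ?_⟩
      have hplt : p.1 < p.2 := by simpa [hD] using hp
      obtain ⟨hq1, hq2, -⟩ := hq p hplt.ne
      rw [hg] at heq
      rcases Sym2.eq_iff.1 heq with ⟨h1, -⟩ | ⟨-, h2⟩
      · exact hv p.1 (hmem h1.symm hq1)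
      · exact hv p.2 (hmem h2.symm hq2)
  obtain ⟨e₀, he₀, hne₀⟩ := hspecial
  have hmaps : ∀ p ∈ D, g p ∈ G.edgeFinset.erase e₀ := by
    intro p hp
    have hplt : p.1 < p.2 := by simpa [hD] using hp
    obtain ⟨-, -, hadjp⟩ := hq p hplt.ne
    exact Finset.mem_erase.2 ⟨hne₀ p hp, SimpleGraph.mem_edgeFinset.2 hadjp⟩
  have hinj : Set.InjOn g D := by
    intro p hp p' hp' heq
    have hplt : p.1 < p.2 := by simpa [hD] using hp
    have hplt' : p'.1 < p'.2 := by simpa [hD] using hp'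
    obtain ⟨hq1, hq2, -⟩ := hq p hplt.ne
    obtain ⟨hq1', hq2', -⟩ := hq p' hplt'.ne
    rw [hg] at heq
    rcases Sym2.eq_iff.1 heq with ⟨h1, h2⟩ | ⟨h1, h2⟩
    · exact Prod.ext (huniq hq1 (hmem h1 hq1')) (huniq hq2 (hmem h2 hq2'))
    · have e1 : p.1 = p'.2 := huniq hq1 (hmem h1 hq2')
      have e2 : p.2 = p'.1 := huniq hq2 (hmem h2 hq1')
      have : p.1 < p.1 := by
        calc p.1 < p.2 := hplt
        _ = p'.1 := e2
        _ < p'.2 := hplt'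
        _ = p.1 := e1.symm
      exact absurd this (lt_irrefl _)
  have hle := Finset.card_le_card_of_injOn g hmaps hinj
  rw [hDcard, Finset.card_erase_of_mem he₀, hcard] at hle
  omega

instance : DecidableRel K33.Adj := fun a b =>
  inferInstanceAs (Decidable ((a.isLeft ∧ b.isRight) ∨ (a.isRight ∧ b.isLeft)))

def pi3 (x y : Fin 3) : Fin 3 ≃ Fin 3 :=
  (Equiv.swap x 0).trans (Equiv.swap ((Equiv.swap x 0) y) 1)
lemma pi3_x (x y : Fin 3) (h : x ≠ y) : pi3 x y x = 0 := by
  simp only [pi3, Equiv.trans_apply, Equiv.swap_apply_left]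
  refine Equiv.swap_apply_of_ne_of_ne (fun h0 => h ?_) (by decide)
  exact (Equiv.swap x 0).injective (by rw [← h0, Equiv.swap_apply_left])
lemma pi3_y (x y : Fin 3) : pi3 x y y = 1 := by
  simp [pi3, Equiv.swap_apply_left]

lemma K33_adj_sumCongr (p q : Fin 3 ≃ Fin 3) (c d : Fin 3 ⊕ Fin 3) :
    K33.Adj (Equiv.sumCongr p q c) (Equiv.sumCongr p q d) ↔ K33.Adj c d := by
  cases c <;> cases d <;> simp [K33]
lemma K33_adj_sumComm (c d : Fin 3 ⊕ Fin 3) :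
    K33.Adj (Equiv.sumComm (Fin 3) (Fin 3) c) (Equiv.sumComm (Fin 3) (Fin 3) d) ↔ K33.Adj c d := by
  cases c <;> cases d <;> simp [K33, or_comm]

lemma exists_sigma (a b : Fin 3 ⊕ Fin 3) (hab : a ≠ b) (hnadj : ¬ K33.Adj a b) :
    ∃ σ : (Fin 3 ⊕ Fin 3) ≃ (Fin 3 ⊕ Fin 3), σ a = Sum.inl 0 ∧ σ b = Sum.inl 1 ∧
      ∀ c d, K33.Adj (σ c) (σ d) ↔ K33.Adj c d := by
  cases a with
  | inl x =>
    cases b with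
    | inl y =>
      have hxy : x ≠ y := fun h => hab (by rw [h])
      exact ⟨Equiv.sumCongr (pi3 x y) (Equiv.refl _), by simp [pi3_x x y hxy],
        by simp [pi3_y], fun c d => K33_adj_sumCongr _ _ c d⟩
    | inr y => exact absurd (Or.inl ⟨rfl, rfl⟩) hnadj
  | inr x =>
    cases b with
    | inl y => exact absurd (Or.inr ⟨rfl, rfl⟩) hnadj
    | inr y =>
      have hxy : x ≠ y := fun h => hab (by rw [h])
      refine ⟨(Equiv.sumCongr (Equiv.refl _) (pi3 x y)).trans (Equiv.sumComm _ _),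
        by simp [pi3_x x y hxy], by simp [pi3_y], fun c d => ?_⟩
      rw [Equiv.trans_apply, Equiv.trans_apply, K33_adj_sumComm, K33_adj_sumCongr]

lemma K33plus_adj (c d : Fin 3 ⊕ Fin 3) :
    K33plus.Adj c d ↔ (s(c, d) = s(Sum.inl 0, Sum.inl 1) ∨ K33.Adj c d) ∧ c ≠ d := by
  rw [K33plus, SimpleGraph.fromEdgeSet_adj, Set.mem_insert_iff, SimpleGraph.mem_edgeSet]

lemma K33_case {V : Type} [Fintype V] (h6 : Fintype.card V = 6) {G : SimpleGraph V}
    (h10 : G.edgeSet.ncard = 10) (hm : IsMinor K33 G) : Nonempty (G ≃g K33plus) := by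
  classical
  obtain ⟨B, hne, -, hdisj, hadj⟩ := hm
  have hcard : G.edgeFinset.card = 10 := by
    rw [← h10, Set.ncard_eq_toFinset_card']
    exact congrArg Finset.card (by ext; simp)
  have huniq : ∀ {v : V} {i j : Fin 3 ⊕ Fin 3}, v ∈ B i → v ∈ B j → i = j := by
    intro v i j hi hj
    by_contra h
    exact Set.disjoint_left.1 (hdisj i j h) hi hj
  -- branch sets are singletons
  set f : (Fin 3 ⊕ Fin 3) → V := fun w => (hne w).choose with hf
  have hfB : ∀ w, f w ∈ B w := fun w => (hne w).choose_spec
  have hfinj : Function.Injective f := fun w1 w2 h => huniq (hfB w1) (h ▸ hfB w2)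
  have hfbij : Function.Bijective f :=
    (Fintype.bijective_iff_injective_and_card f).2 ⟨hfinj, by simp [h6]⟩
  have hsingle : ∀ w, B w = {f w} := by
    intro w
    by_contra hBw
    -- then B w has a second element
    obtain ⟨x, hx, hxne⟩ : ∃ x ∈ B w, x ≠ f w := by
      by_contra h
      push_neg at h
      exact hBw (Set.eq_singleton_iff_unique_mem.2 ⟨hfB w, h⟩)
    -- 7 distinct vertices in V? no: the f w' for w' ≠ w, f w, and x : 7? no, 6+1.
    -- injective map from Option (Fin 3 ⊕ Fin 3) (card 7) into V (card 6)
    have : Function.Injective (fun o : Option (Fin 3 ⊕ Fin 3) => o.elim x f) := by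
      intro o1 o2 heq
      match o1, o2 with
      | none, none => rfl
      | some w1, some w2 => exact congrArg some (hfinj heq)
      | none, some w2 =>
        simp only [Option.elim] at heq
        have hx2 : x ∈ B w2 := by rw [heq]; exact hfB w2
        have hw2 : w = w2 := huniq hx hx2
        exact (hxne (heq.trans (congrArg f hw2.symm))).elim
      | some w1, none =>
        simp only [Option.elim] at heq
        have hx1 : x ∈ B w1 := by rw [← heq]; exact hfB w1
        have hw1 : w = w1 := huniq hx hx1
        exact (hxne (heq.symm.trans (congrArg f hw1.symm))).elim
    have := Fintype.card_le_of_injective _ this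
    simp [h6] at this
  -- adjacency across f
  have hGK : ∀ w1 w2, K33.Adj w1 w2 → G.Adj (f w1) (f w2) := by
    intro w1 w2 h
    obtain ⟨u, hu, x, hx, hux⟩ := hadj w1 w2 h
    rw [hsingle w1] at hu
    rw [hsingle w2] at hx
    rwa [← hu, ← hx]
  -- the image of K33's edges
  set I : Finset (Sym2 V) := K33.edgeFinset.image (Sym2.map f) with hI
  have hIcard : I.card = 9 := by
    rw [hI, Finset.card_image_of_injective _ (Sym2.map.injective hfinj)]
    decide
  have hIsub : I ⊆ G.edgeFinset := by
    intro e he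
    rw [hI, Finset.mem_image] at he
    obtain ⟨e', he', rfl⟩ := he
    induction e' with
    | _ w1 w2 =>
      rw [SimpleGraph.mem_edgeFinset, SimpleGraph.mem_edgeSet] at he'
      exact SimpleGraph.mem_edgeFinset.2 (hGK w1 w2 he')
  -- the extra edge
  have hsd : (G.edgeFinset \ I).Nonempty := by
    rw [← Finset.card_pos, Finset.card_sdiff_of_subset hIsub, hcard, hIcard]
    omega
  obtain ⟨e₀, he₀⟩ := hsd
  rw [Finset.mem_sdiff] at he₀
  obtain ⟨he₀E, he₀I⟩ := he₀
  have hEeq : G.edgeFinset = insert e₀ I := by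
    refine (Finset.eq_of_subset_of_card_le ?_ ?_).symm
    · intro e he
      rcases Finset.mem_insert.1 he with rfl | he
      · exact he₀E
      · exact hIsub he
    · rw [hcard, Finset.card_insert_of_notMem he₀I, hIcard]
  -- write e₀ = s(f a, f b)
  obtain ⟨a, b, he₀ab⟩ : ∃ a b, e₀ = Sym2.map f s(a, b) := by
    induction e₀ with
    | _ u v =>
      obtain ⟨a, rfl⟩ := hfbij.2 u
      obtain ⟨b, rfl⟩ := hfbij.2 v
      exact ⟨a, b, rfl⟩
  have hab : a ≠ b := by
    rintro rfl
    have := G.not_isDiag_of_mem_edgeSet (SimpleGraph.mem_edgeFinset.1 he₀E)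
    rw [he₀ab] at this
    exact this (by simp)
  have hnadjab : ¬ K33.Adj a b := by
    intro h
    exact he₀I (by
      rw [hI, Finset.mem_image]
      exact ⟨s(a, b), SimpleGraph.mem_edgeFinset.2 h, he₀ab.symm⟩)
  -- characterization of G's adjacency
  have hch : ∀ c d, G.Adj (f c) (f d) ↔ (s(c, d) = s(a, b) ∨ K33.Adj c d) := by
    intro c d
    constructor
    · intro h
      have hmem : s(f c, f d) ∈ G.edgeFinset := SimpleGraph.mem_edgeFinset.2 h
      rw [hEeq, Finset.mem_insert] at hmem
      rcases hmem with h' | h'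
      · left
        apply Sym2.map.injective hfinj
        rw [Sym2.map_pair_eq]
        exact h'.trans he₀ab
      · right
        rw [hI, Finset.mem_image] at h'
        obtain ⟨e', he', heq⟩ := h'
        have he'' : e' = s(c, d) :=
          Sym2.map.injective hfinj (heq.trans (Sym2.map_pair_eq f c d).symm)
        rw [he''] at he'
        exact SimpleGraph.mem_edgeFinset.1 he'
    · rintro (h | h)
      · have he : s(f c, f d) = e₀ := by rw [he₀ab, ← h, Sym2.map_pair_eq]
        have : s(f c, f d) ∈ G.edgeFinset := by rw [he]; exact he₀E
        exact SimpleGraph.mem_edgeFinset.1 this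
      · exact hGK c d h
  -- build the isomorphism
  obtain ⟨σ, hσa, hσb, hσadj⟩ := exists_sigma a b hab hnadjab
  have key : ∀ c d : Fin 3 ⊕ Fin 3,
      K33plus.Adj (σ c) (σ d) ↔ (s(c, d) = s(a, b) ∨ K33.Adj c d) := by
    intro c d
    rw [K33plus_adj]
    constructor
    · rintro ⟨h | h, -⟩
      · left
        apply Sym2.map.injective σ.injective
        rw [Sym2.map_pair_eq, Sym2.map_pair_eq, hσa, hσb]
        exact h
      · exact Or.inr ((hσadj c d).1 h)
    · rintro (h | h)
      · constructor
        · left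
          have := congrArg (Sym2.map σ) h
          rwa [Sym2.map_pair_eq, Sym2.map_pair_eq, hσa, hσb] at this
        · intro hcd
          apply hab
          have hcd' : c = d := σ.injective hcd
          subst hcd'
          rcases Sym2.eq_iff.1 h with ⟨h1, h2⟩ | ⟨h1, h2⟩ <;> rw [← h1, ← h2]
      · exact ⟨Or.inr ((hσadj c d).2 h), fun hcd => h.ne (σ.injective hcd)⟩
  set F : (Fin 3 ⊕ Fin 3) ≃ V := Equiv.ofBijective f hfbij with hF
  refine ⟨⟨F.symm.trans σ, ?_⟩⟩
  intro x y
  simp only [Equiv.trans_apply]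
  rw [key, ← hch]
  have hx : f (F.symm x) = x := F.apply_symm_apply x
  have hy : f (F.symm y) = y := F.apply_symm_apply y
  rw [hx, hy]

/-- Up to isomorphism, the unique connected simple graph with 6 vertices and 10 edges that
has `K₅` or `K₃,₃` as a minor is the graph obtained from `K₃,₃` by adding one extra edge. -/
theorem unique_nonplanar_graph_with_6_vertices_10_edges :
    (K33plus.Connected ∧ K33plus.edgeSet.ncard = 10 ∧
      (IsMinor K5 K33plus ∨ IsMinor K33 K33plus)) ∧
    (∀ (V : Type) [Fintype V], Fintype.card V = 6 →
      ∀ G : SimpleGraph V, G.Connected → G.edgeSet.ncard = 10 →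
        (IsMinor K5 G ∨ IsMinor K33 G) → Nonempty (G ≃g K33plus)) := by
  refine ⟨⟨K33plus_connected, ?_, Or.inr ?_⟩, ?_⟩
  · rw [Set.ncard_eq_toFinset_card']
    decide
  · refine ⟨fun w => {w}, fun w => ⟨w, rfl⟩, fun w => induce_singleton_connected _ w,
      fun w1 w2 h => Set.disjoint_singleton.2 h,
      fun w1 w2 h => ⟨w1, rfl, w2, rfl, K33_le_K33plus h⟩⟩
  · intro V _ h6 G hc h10 hm
    rcases hm with h | h
    · exact absurd h (no_K5 h6 hc h10)
    · exact K33_case h6 h10 h
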